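/- Let CT be a caterpillar of length k ≥ 1 in which every stem has at most two pendent neighbours. Then β_b(CT) = 2k + 2 = 2(diam(CT) − 1). -/

import Mathlib

open SimpleGraph Finset
open scoped Classical

variable {V : Type*}

noncomputable def ecc [Fintype V] (G : SimpleGraph V) (v : V) : ℕ :=
  Finset.univ.sup (fun u => G.dist v u)

noncomputable def gdiam [Fintype V] (G : SimpleGraph V) : ℕ :=
  Finset.univ.sup (fun v => ecc G v)

def IsIndepBroadcast [Fintype V] (G : SimpleGraph V) (f : V → ℕ) : Prop :=
  (∀ v, f v ≤ ecc G v) ∧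
  ∀ u v, u ≠ v → 0 < f u → 0 < f v → max (f u) (f v) < G.dist u v

def cost [Fintype V] (f : V → ℕ) : ℕ := ∑ v, f v

noncomputable def betaB [Fintype V] (G : SimpleGraph V) : ℕ :=
  sSup {c | ∃ f, IsIndepBroadcast G f ∧ cost f = c}

abbrev CatV (k : ℕ) (lam : Fin (k+1) → ℕ) := Fin (k+1) ⊕ (Σ i : Fin (k+1), Fin (lam i))

def caterpillar (k : ℕ) (lam : Fin (k+1) → ℕ) : SimpleGraph (CatV k lam) :=
  SimpleGraph.fromRel (fun u v => match u, v with
    | Sum.inl i, Sum.inl j => (i : ℕ) + 1 = (j : ℕ)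
    | Sum.inl i, Sum.inr p => i = p.1
    | _, _ => False)

def numLeaves (k : ℕ) (lam : Fin (k+1) → ℕ) : ℕ := ∑ i, lam i

def numTrunks (k : ℕ) (lam : Fin (k+1) → ℕ) : ℕ :=
  (Finset.univ.filter (fun i : Fin (k+1) => lam i = 0)).card

def noAdjTrunks (k : ℕ) (lam : Fin (k+1) → ℕ) : Prop :=
  ∀ i j : Fin (k+1), (i : ℕ) + 1 = (j : ℕ) → ¬(lam i = 0 ∧ lam j = 0)

def fstar (k : ℕ) (lam : Fin (k+1) → ℕ) (f : CatV k lam → ℕ) (i : Fin (k+1)) : ℕ :=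
  f (Sum.inl i) + ∑ j, f (Sum.inr ⟨i, j⟩)

lemma GLlem {α : Type*} : ∀ (n : ℕ) (S : Finset α) (k a b : ℕ) (c f : α → ℕ) (t : α → Bool),
    S.card ≤ n → 2 ≤ a → 2 ≤ b →
    (∀ v ∈ S, 1 ≤ f v) → (∀ v ∈ S, c v ≤ k) →
    (∀ v ∈ S, f v ≤ max (c v + a) (k - c v + b)) →
    (∀ u ∈ S, ∀ v ∈ S, u ≠ v → max (f u) (f v) ≤ Nat.dist (c u) (c v) + 1) →
    (∀ u ∈ S, ∀ v ∈ S, u ≠ v → c u = c v → t u ≠ t v) →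
    ∑ v ∈ S, f v ≤ 2*k + a + b - 2 := by
  intro n
  induction n with
  | zero =>
    intro S k a b c f t hcard _ _ _ _ _ _ _
    have : S = ∅ := Finset.card_eq_zero.mp (Nat.le_zero.mp hcard)
    subst this; simp
  | succ n IH =>
    intro S k a b c f t hcard ha hb h1 hck hcap hpair htie
    rcases S.eq_empty_or_nonempty with rfl | hS
    · simp
    have hSimg : (S.image c).Nonempty := hS.image c
    set cmin := (S.image c).min' hSimg with hcmin
    obtain ⟨v1, hv1S, hv1c⟩ : ∃ v ∈ S, c v = cmin := by
      have := (S.image c).min'_mem hSimg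
      simpa [Finset.mem_image] using this
    have hminle : ∀ w ∈ S, cmin ≤ c w := fun w hw =>
      Finset.min'_le _ _ (Finset.mem_image_of_mem c hw)
    set T := S.filter (fun v => c v = cmin) with hT
    set R := S.filter (fun v => ¬ c v = cmin) with hR
    have hTsub : T ⊆ S := Finset.filter_subset _ _
    have hRsub : R ⊆ S := Finset.filter_subset _ _
    have hsplit : ∑ v ∈ T, f v + ∑ v ∈ R, f v = ∑ v ∈ S, f v :=
      Finset.sum_filter_add_sum_filter_not S _ f
    have hv1T : v1 ∈ T := Finset.mem_filter.mpr ⟨hv1S, hv1c⟩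
    have hTpos : 1 ≤ T.card := Finset.card_pos.mpr ⟨v1, hv1T⟩
    have hTcard2 : T.card ≤ 2 := by
      have h2 : T.card ≤ (Finset.univ : Finset Bool).card := by
        apply Finset.card_le_card_of_injOn t (fun _ _ => Finset.mem_univ _)
        intro x hx y hy hxy
        by_contra hne
        exact htie x (hTsub hx) y (hTsub hy) hne
          (by rw [(Finset.mem_filter.mp hx).2, (Finset.mem_filter.mp hy).2]) hxy
      simpa using h2
    have hRlt : R.card < S.card := Finset.card_lt_card
      (Finset.ssubset_iff_of_subset hRsub |>.mpr
        ⟨v1, hv1S, fun hm => (Finset.mem_filter.mp hm).2 hv1c⟩)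
    have hRcol : ∀ w ∈ R, cmin < c w := by
      intro w hw
      rcases Finset.mem_filter.mp hw with ⟨hwS, hne⟩
      exact lt_of_le_of_ne (hminle w hwS) (Ne.symm hne)
    have hRf : ∀ w ∈ R, f w + cmin ≤ c w + 1 ∧ f v1 + cmin ≤ c w + 1 := by
      intro w hw
      have hwS := hRsub hw
      have hne : v1 ≠ w := by
        intro h; subst h
        exact (Finset.mem_filter.mp hw).2 hv1c
      have hp := hpair v1 hv1S w hwS hne
      have hlt := hRcol w hw
      rw [hv1c, Nat.max_le] at hp
      simp [Nat.dist] at hp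
      omega
    have hTf1 : 2 ≤ T.card → ∀ x ∈ T, f x = 1 := by
      intro h2 x hx
      obtain ⟨y, hy, hyx⟩ := Finset.exists_mem_ne (s := T) (by omega) x
      have hcx := (Finset.mem_filter.mp hx).2
      have hcy := (Finset.mem_filter.mp hy).2
      have hp := hpair x (hTsub hx) y (hTsub hy) (Ne.symm hyx)
      rw [hcx, hcy, Nat.max_le] at hp
      simp [Nat.dist] at hp
      have := h1 x (hTsub hx)
      omega
    rcases R.eq_empty_or_nonempty with hRe | hRne
    · -- no other columns
      rw [hRe] at hsplit
      simp at hsplit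
      rcases Nat.lt_or_ge T.card 2 with hc1 | hc2
      · have hc1' : T.card = 1 := by omega
        obtain ⟨x, hx⟩ := Finset.card_eq_one.mp hc1'
        rw [← hsplit, hx, Finset.sum_singleton]
        have hxS : x ∈ S := hTsub (hx ▸ Finset.mem_singleton_self x)
        have hc := hcap x hxS
        have hk := hck x hxS
        rw [Nat.max_def] at hc
        split_ifs at hc <;> omega
      · have hsum2 : ∑ v ∈ T, f v = 2 := by
          rw [Finset.sum_congr rfl (hTf1 hc2), Finset.sum_const, smul_eq_mul]
          omega
        omega
    · -- there are elements to the right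
      obtain ⟨w0, hw0⟩ := hRne
      -- shared continuation
      have cont : ∀ A : ℕ, 2 ≤ A →
          (∀ w ∈ R, cmin + (A - 1) ≤ c w) →
          (∀ w ∈ R, f w + (cmin + (A - 1)) ≤ c w + A) →
          (∑ v ∈ T, f v) + A ≤ 2*(cmin + (A - 1)) + a →
          ∑ v ∈ S, f v ≤ 2*k + a + b - 2 := by
        intro A hA2 Hcol Hcap2 Hsum
        set o := cmin + (A - 1) with ho
        have hok : o ≤ k := le_trans (Hcol w0 hw0) (hck w0 (hRsub hw0))
        have hRcard : R.card ≤ n := Nat.lt_succ_iff.mp (lt_of_lt_of_le hRlt hcard)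
        have hrec := IH R (k - o) A b (fun v => c v - o) f t hRcard hA2 hb
          (fun v hv => h1 v (hRsub hv))
          (fun v hv => by have := hck v (hRsub hv); have := Hcol v hv; simp; omega)
          (fun v hv => by
            have h2 := Hcap2 v hv; have h3 := Hcol v hv
            exact le_max_iff.mpr (Or.inl (by omega)))
          (fun u hu v hv huv => by
            have hp := hpair u (hRsub hu) v (hRsub hv) huv
            have hcu := Hcol u hu; have hcv := Hcol v hv
            rw [Nat.max_le] at hp ⊢
            simp [Nat.dist] at hp ⊢
            omega)
          (fun u hu v hv huv hcc => htie u (hRsub hu) v (hRsub hv) huv (by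
            have := Hcol u hu; have := Hcol v hv
            omega))
        rw [← hsplit]
        omega
      rcases Nat.lt_or_ge T.card 2 with hc1 | hc2
      · -- T = {v1}
        have hc1' : T.card = 1 := by omega
        have hTv1 : T = {v1} := by
          obtain ⟨x, hx⟩ := Finset.card_eq_one.mp hc1'
          have : v1 ∈ ({x} : Finset α) := hx ▸ hv1T
          rw [Finset.mem_singleton] at this
          rw [hx, this]
        have hsumT : ∑ v ∈ T, f v = f v1 := by rw [hTv1, Finset.sum_singleton]
        rcases Nat.le_total (f v1) 2 with hf1 | hf1
        · -- A = 2
          apply cont 2 le_rfl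
          · intro w hw; have := hRcol w hw; omega
          · intro w hw; have := (hRf w hw).1; omega
          · rw [hsumT]; omega
        · -- A = f v1
          apply cont (f v1) hf1
          · intro w hw; have := (hRf w hw).2; have := hRcol w hw
            have := h1 v1 hv1S; omega
          · intro w hw; have := (hRf w hw).1; have := h1 v1 hv1S; omega
          · rw [hsumT]; omega
      · -- T has two elements, all f = 1
        have hsum2 : ∑ v ∈ T, f v = 2 := by
          rw [Finset.sum_congr rfl (hTf1 hc2), Finset.sum_const, smul_eq_mul]
          omega
        apply cont 2 le_rfl
        · intro w hw; have := hRcol w hw; omega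
        · intro w hw; have := (hRf w hw).1; omega
        · rw [hsum2]; omega

namespace CatAux


variable {k : ℕ} {lam : Fin (k+1) → ℕ}

def col : CatV k lam → ℕ := fun v => match v with
  | Sum.inl i => i
  | Sum.inr p => p.1

lemma col_le (v : CatV k lam) : col v ≤ k := by
  cases v with
  | inl i => exact i.is_le
  | inr p => exact p.1.is_le

lemma adj_spine {i j : Fin (k+1)} (h : (i:ℕ)+1 = j) :
    (caterpillar k lam).Adj (Sum.inl i) (Sum.inl j) := by
  rw [caterpillar, SimpleGraph.fromRel_adj]
  exact ⟨by simp [Fin.ext_iff]; omega, Or.inl h⟩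

lemma adj_leaf (p : Σ i : Fin (k+1), Fin (lam i)) :
    (caterpillar k lam).Adj (Sum.inl p.1) (Sum.inr p) := by
  rw [caterpillar, SimpleGraph.fromRel_adj]
  exact ⟨by simp, Or.inl rfl⟩

lemma spine_walk : ∀ (n : ℕ) (i j : Fin (k+1)), (i:ℕ) + n = (j:ℕ) →
    ∃ p : (caterpillar k lam).Walk (Sum.inl i) (Sum.inl j), p.length = n := by
  intro n
  induction n with
  | zero =>
    intro i j h
    have : i = j := Fin.ext (by omega)
    subst this; exact ⟨.nil, rfl⟩
  | succ n IH =>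
    intro i j h
    have hj : (j:ℕ) ≤ k := j.is_le
    have hi1 : (i:ℕ)+1 < k+1 := by omega
    obtain ⟨p, hp⟩ := IH ⟨(i:ℕ)+1, hi1⟩ j (by simp; omega)
    exact ⟨.cons (adj_spine (by simp)) p, by simp [hp]⟩

lemma walk_to_spine (u : CatV k lam) :
    ∃ (i : Fin (k+1)) (p : (caterpillar k lam).Walk u (Sum.inl i)),
      (i:ℕ) = col u ∧ p.length ≤ 1 := by
  cases u with
  | inl i => exact ⟨i, .nil, rfl, by simp⟩
  | inr p => exact ⟨p.1, .cons (adj_leaf p).symm .nil, rfl, by simp⟩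

lemma exists_spine_walk (i j : Fin (k+1)) :
    ∃ p : (caterpillar k lam).Walk (Sum.inl i) (Sum.inl j), p.length = Nat.dist i j := by
  rcases Nat.le_total (i:ℕ) (j:ℕ) with h | h
  · obtain ⟨p, hp⟩ := spine_walk ((j:ℕ) - i) i j (by omega)
    exact ⟨p, by rw [hp]; simp [Nat.dist]; omega⟩
  · obtain ⟨p, hp⟩ := spine_walk ((i:ℕ) - j) j i (by omega)
    exact ⟨p.reverse, by rw [SimpleGraph.Walk.length_reverse, hp]; simp [Nat.dist]; omega⟩

lemma exists_walk_col (u v : CatV k lam) :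
    ∃ p : (caterpillar k lam).Walk u v, p.length ≤ Nat.dist (col u) (col v) + 2 := by
  obtain ⟨i, p, hi, hp⟩ := walk_to_spine u
  obtain ⟨j, q, hj, hq⟩ := walk_to_spine v
  obtain ⟨m, hm⟩ := exists_spine_walk (lam := lam) i j
  refine ⟨p.append (m.append q.reverse), ?_⟩
  rw [SimpleGraph.Walk.length_append, SimpleGraph.Walk.length_append,
    SimpleGraph.Walk.length_reverse, hm, hi, hj]
  omega

lemma cat_dist_le (u v : CatV k lam) :
    (caterpillar k lam).dist u v ≤ Nat.dist (col u) (col v) + 2 := by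
  obtain ⟨p, hp⟩ := exists_walk_col u v
  exact le_trans (SimpleGraph.dist_le p) hp

lemma cat_reachable (u v : CatV k lam) : (caterpillar k lam).Reachable u v := by
  obtain ⟨p, _⟩ := exists_walk_col u v
  exact ⟨p⟩

lemma walk_lip (φ : CatV k lam → ℕ)
    (hφ : ∀ {x y : CatV k lam}, (caterpillar k lam).Adj x y → Nat.dist (φ x) (φ y) ≤ 1) :
    ∀ {u v : CatV k lam} (p : (caterpillar k lam).Walk u v),
      Nat.dist (φ u) (φ v) ≤ p.length := by
  intro u v p
  induction p with
  | nil => simp [Nat.dist]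
  | cons h p IH =>
    have h1 := hφ h
    rw [SimpleGraph.Walk.length_cons]
    simp [Nat.dist] at h1 IH ⊢
    omega

lemma cat_dist_lower (φ : CatV k lam → ℕ)
    (hφ : ∀ {x y : CatV k lam}, (caterpillar k lam).Adj x y → Nat.dist (φ x) (φ y) ≤ 1)
    (u v : CatV k lam) : Nat.dist (φ u) (φ v) ≤ (caterpillar k lam).dist u v := by
  obtain ⟨p, hp⟩ := (cat_reachable u v).exists_walk_length_eq_dist
  rw [← hp]
  exact walk_lip φ hφ p

lemma ecc_le (v : CatV k lam) :
    ecc (caterpillar k lam) v ≤ max (col v + 2) (k - col v + 2) := by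
  apply Finset.sup_le
  intro u _
  have h := cat_dist_le v u
  have hu := col_le u
  rcases Nat.le_total (col u) (col v) with h' | h'
  · exact le_max_iff.mpr (Or.inl (by simp [Nat.dist] at h; omega))
  · exact le_max_iff.mpr (Or.inr (by simp [Nat.dist] at h; omega))

end CatAux

open CatAux in
theorem stmt14 (k : ℕ) (hk : 1 ≤ k) (lam : Fin (k+1) → ℕ)
    (h0 : 0 < lam 0) (hl : 0 < lam (Fin.last k))
    (hlam : ∀ i, lam i ≤ 2) :
    betaB (caterpillar k lam) = 2 * k + 2 ∧
    2 * k + 2 = 2 * (gdiam (caterpillar k lam) - 1) := by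
  set G := caterpillar k lam with hG
  set A : CatV k lam := Sum.inr ⟨(0 : Fin (k+1)), ⟨0, h0⟩⟩ with hA
  set B : CatV k lam := Sum.inr ⟨Fin.last k, ⟨0, hl⟩⟩ with hB
  have hAB : A ≠ B := by
    rw [hA, hB]
    intro h
    have h2 := Sum.inr.inj h
    have h3 : ((0 : Fin (k+1)) : ℕ) = (Fin.last k : ℕ) := by
      have := congrArg Sigma.fst h2
      exact congrArg Fin.val this
    simp [Fin.val_last] at h3
    omega
  have hcolA : col A = 0 := by simp [hA, col]
  have hcolB : col B = k := by simp [hB, col, Fin.val_last]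
  -- potential for lower bound
  set φ : CatV k lam → ℕ := fun v => match v with
    | Sum.inl i => (i:ℕ)+1
    | Sum.inr p => if (p.1:ℕ) = 0 then 0 else if (p.1:ℕ) = k then k+2 else (p.1:ℕ)+1
    with hφdef
  have hφ : ∀ {x y : CatV k lam}, G.Adj x y → Nat.dist (φ x) (φ y) ≤ 1 := by
    intro x y hadj
    rw [hG, caterpillar, SimpleGraph.fromRel_adj] at hadj
    obtain ⟨hne, hr⟩ := hadj
    rcases x with i | p <;> rcases y with j | q
    · simp only [hφdef]
      rcases hr with h | h <;> (simp only [Nat.dist]; omega)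
    · have hiq : (i:ℕ) = (q.1:ℕ) := by
        rcases hr with h | h
        · exact congrArg Fin.val h
        · exact absurd h (by simp)
      simp only [hφdef, ← hiq]
      split_ifs <;> (simp only [Nat.dist]; omega)
    · have hiq : (j:ℕ) = (p.1:ℕ) := by
        rcases hr with h | h
        · exact absurd h (by simp)
        · exact congrArg Fin.val h
      simp only [hφdef, ← hiq]
      split_ifs <;> (simp only [Nat.dist]; omega)
    · rcases hr with h | h <;> exact absurd h (by simp)
  have hφA : φ A = 0 := by simp [hφdef, hA]
  have hφB : φ B = k + 2 := by
    simp only [hφdef, hB, Fin.val_last]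
    split_ifs <;> omega
  have hdAB_ge : k + 2 ≤ G.dist A B := by
    have := cat_dist_lower φ hφ A B
    rw [hφA, hφB] at this
    simpa [Nat.dist] using this
  have hdAB_le : G.dist A B ≤ k + 2 := by
    have := cat_dist_le A B
    rw [hcolA, hcolB] at this
    simpa [Nat.dist] using this
  have hecc_le' : ∀ v : CatV k lam, ecc G v ≤ k + 2 := by
    intro v
    refine le_trans (ecc_le v) (max_le (by have := col_le v; omega) (by omega))
  have heccA : k + 2 ≤ ecc G A :=
    le_trans hdAB_ge (Finset.le_sup (f := fun u => G.dist A u) (Finset.mem_univ B))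
  have hBA : k + 2 ≤ G.dist B A := by
    rw [SimpleGraph.dist_comm]; exact hdAB_ge
  have heccB : k + 2 ≤ ecc G B :=
    le_trans hBA (Finset.le_sup (f := fun u => G.dist B u) (Finset.mem_univ A))
  have hgd : gdiam G = k + 2 := by
    refine le_antisymm (Finset.sup_le fun v _ => hecc_le' v) ?_
    exact le_trans heccA (Finset.le_sup (f := fun v => ecc G v) (Finset.mem_univ A))
  constructor
  swap
  · rw [hgd]; omega
  -- betaB
  set fw : CatV k lam → ℕ := fun v => (if v = A then k+1 else 0) + (if v = B then k+1 else 0)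
    with hfw
  have hfwA : fw A = k + 1 := by simp [hfw, hAB]
  have hfwB : fw B = k + 1 := by simp [hfw, Ne.symm hAB]
  have hfw_pos : ∀ v, 0 < fw v → v = A ∨ v = B := by
    intro v hv
    by_contra h
    push_neg at h
    simp [hfw, h.1, h.2] at hv
  have hmem : (2*k+2) ∈ {c | ∃ f, IsIndepBroadcast G f ∧ cost f = c} := by
    refine ⟨fw, ⟨?_, ?_⟩, ?_⟩
    · intro v
      by_cases hvA : v = A
      · subst hvA; rw [hfwA]; omega
      · by_cases hvB : v = B
        · subst hvB; rw [hfwB]; omega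
        · simp [hfw, hvA, hvB]
    · intro u v huv hu hv
      rcases hfw_pos u hu with rfl | rfl <;> rcases hfw_pos v hv with rfl | rfl
      · exact absurd rfl huv
      · rw [hfwA, hfwB]; simp; omega
      · rw [hfwA, hfwB, SimpleGraph.dist_comm]; simp; omega
      · exact absurd rfl huv
    · rw [cost, hfw]
      rw [Finset.sum_add_distrib]
      rw [Finset.sum_ite_eq' Finset.univ A (fun _ => k+1),
        Finset.sum_ite_eq' Finset.univ B (fun _ => k+1)]
      simp; omega
  have hub : ∀ x ∈ {c | ∃ f, IsIndepBroadcast G f ∧ cost f = c}, x ≤ 2*k+2 := by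
    rintro x ⟨f, ⟨hfe, hfi⟩, rfl⟩
    set S : Finset (CatV k lam) := Finset.univ.filter (fun v => f v ≠ 0) with hS
    have hsum : ∑ v ∈ S, f v = cost f := Finset.sum_filter_of_ne (fun x _ h => h)
    set t : CatV k lam → Bool := fun v => match v with
      | Sum.inl _ => true
      | Sum.inr p => decide ((p.2:ℕ) = 0)
      with ht
    have hSmem : ∀ v ∈ S, f v ≠ 0 := fun v hv => (Finset.mem_filter.mp hv).2
    have hmax : ∀ u ∈ S, ∀ v ∈ S, u ≠ v → max (f u) (f v) < G.dist u v := by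
      intro u hu v hv huv
      have h1 : 0 < f u := Nat.pos_of_ne_zero (hSmem u hu)
      have h2 : 0 < f v := Nat.pos_of_ne_zero (hSmem v hv)
      exact hfi u v huv h1 h2
    have hglc := GLlem S.card S k 2 2 col f t le_rfl le_rfl le_rfl
      (fun v hv => Nat.one_le_iff_ne_zero.mpr (hSmem v hv))
      (fun v _ => col_le v)
      (fun v _ => le_trans (hfe v) (ecc_le v))
      (by
        intro u hu v hv huv
        have h := hmax u hu v hv huv
        have hd : G.dist u v ≤ Nat.dist (col u) (col v) + 2 := cat_dist_le u v
        rw [Nat.max_lt] at h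
        rw [Nat.max_le]
        omega)
      (by
        intro u hu v hv huv hcc
        rcases u with i | p <;> rcases v with j | q
        · exfalso
          apply huv
          have : i = j := Fin.ext hcc
          rw [this]
        · exfalso
          have hij : i = q.1 := Fin.ext hcc
          have hadj : G.Adj (Sum.inl i) (Sum.inr q) := by rw [hij]; exact adj_leaf q
          have hdl : G.dist (Sum.inl i) (Sum.inr q) ≤ 1 :=
            SimpleGraph.dist_le (SimpleGraph.Walk.cons hadj SimpleGraph.Walk.nil)
          have := hmax _ hu _ hv huv
          have h1 : 0 < f (Sum.inl i) := Nat.pos_of_ne_zero (hSmem _ hu)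
          rw [Nat.max_lt] at this
          omega
        · exfalso
          have hij : j = p.1 := Fin.ext hcc.symm
          have hadj : G.Adj (Sum.inr p) (Sum.inl j) := by rw [hij]; exact (adj_leaf p).symm
          have hdl : G.dist (Sum.inr p) (Sum.inl j) ≤ 1 :=
            SimpleGraph.dist_le (SimpleGraph.Walk.cons hadj SimpleGraph.Walk.nil)
          have := hmax _ hu _ hv huv
          have h1 : 0 < f (Sum.inr p) := Nat.pos_of_ne_zero (hSmem _ hu)
          rw [Nat.max_lt] at this
          omega
        · obtain ⟨i, x⟩ := p
          obtain ⟨j, y⟩ := q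
          have hij : i = j := Fin.ext hcc
          subst hij
          have hxy : (x:ℕ) ≠ (y:ℕ) := by
            intro h
            exact huv (by rw [Fin.ext h])
          have hx2 : (x:ℕ) < 2 := lt_of_lt_of_le x.isLt (hlam i)
          have hy2 : (y:ℕ) < 2 := lt_of_lt_of_le y.isLt (hlam i)
          simp only [ht, ne_eq, decide_eq_decide]
          omega)
    rw [hsum] at hglc
    omega
  have hbdd : BddAbove {c | ∃ f, IsIndepBroadcast G f ∧ cost f = c} := ⟨2*k+2, hub⟩
  exact le_antisymm (csSup_le ⟨_, hmem⟩ hub) (le_csSup hbdd hmem)
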